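/- Let H be a connected multigraph with at least one edge and let G′ be any subdivision of G*. Then pack_{H⁺}(G*) = pack_{H⁺}(G′) and cover_{H⁺}(G*) = cover_{H⁺}(G′). -/

import Mathlib

open scoped Classical

/-- A finite loopless multigraph: `E` indexes edges, `ends e` gives the endpoints. -/
structure Multigraph (V : Type) (E : Type) where
  ends : E → Sym2 V
  loopless : ∀ e, ¬ (ends e).IsDiag

namespace Multigraph

variable {V E V1 E1 V2 E2 : Type}

/-- Multidegree: number of edges (with multiplicity) incident with `v`. -/
noncomputable def mdeg (G : Multigraph V E) [Fintype E] (v : V) : ℕ :=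
  (Finset.univ.filter (fun e => v ∈ G.ends e)).card

/-- Walks in a multigraph, remembering which edge instance is used at each step. -/
inductive Walk (G : Multigraph V E) : V → V → Type where
  | nil (v : V) : Walk G v v
  | cons {u v w : V} (e : E) (he : G.ends e = s(u, v)) (p : Walk G v w) : Walk G u w

namespace Walk

variable {G : Multigraph V E}

def support : {u v : V} → G.Walk u v → List V
  | u, _, .nil _ => [u]
  | u, _, .cons _ _ p => u :: p.support

def edges : {u v : V} → G.Walk u v → List E
  | _, _, .nil _ => []
  | _, _, .cons e _ p => e :: p.edges

/-- A walk is a path when its vertices are pairwise distinct. -/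
def IsPath {u v : V} (p : G.Walk u v) : Prop := p.support.Nodup

/-- The internal vertices of a walk (all vertices except the two endpoints). -/
def interior {u v : V} (p : G.Walk u v) : List V := p.support.tail.dropLast

end Walk

/-- An `H`-immersion model in `G`. -/
structure ImmersionModel (H : Multigraph V1 E1) (G : Multigraph V E) where
  vmap : V1 → V
  vmap_inj : Function.Injective vmap
  src : E1 → V1
  tgt : E1 → V1
  ends_eq : ∀ e, H.ends e = s(src e, tgt e)
  path : ∀ e, G.Walk (vmap (src e)) (vmap (tgt e))
  path_isPath : ∀ e, (path e).IsPath
  edge_disjoint : ∀ e₁ e₂, e₁ ≠ e₂ → ∀ x, x ∈ (path e₁).edges → x ∉ (path e₂).edges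

namespace ImmersionModel

variable {H : Multigraph V1 E1} {G : Multigraph V E}

/-- The edges of the immersion expansion associated with the model. -/
def edgeSet (m : ImmersionModel H G) : Set E := {x | ∃ e, x ∈ (m.path e).edges}

/-- The vertices of the immersion expansion associated with the model. -/
def vertSet (m : ImmersionModel H G) : Set V :=
  {x | (∃ a, m.vmap a = x) ∨ ∃ e, x ∈ (m.path e).support}

end ImmersionModel

/-- `G` contains `H` as an immersion. -/
def Immersed (H : Multigraph V1 E1) (G : Multigraph V E) : Prop :=
  Nonempty (ImmersionModel H G)

/-- Deleting a set of edges from a multigraph. -/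
def deleteEdges (G : Multigraph V E) (F : Set E) : Multigraph V {e : E // e ∉ F} where
  ends e := G.ends e.1
  loopless e := G.loopless e.1

/-- The minimum size of an `H`-cover of `G`: a set of edges meeting every
`H`-immersion expansion. (By convention `sInf ∅ = 0`.) -/
noncomputable def coverNum (H : Multigraph V1 E1) (G : Multigraph V E) : ℕ :=
  sInf {n | ∃ C : Finset E, ¬ Immersed H (G.deleteEdges ↑C) ∧ C.card = n}

/-- The maximum size of an `H`-packing in `G`: a collection of pairwise
edge-disjoint `H`-immersion expansions. -/
noncomputable def packNum (H : Multigraph V1 E1) (G : Multigraph V E) : ℕ :=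
  sSup {n | ∃ f : Fin n → ImmersionModel H G,
    ∀ i j, i ≠ j → Disjoint (f i).edgeSet (f j).edgeSet}

/-- Connectivity of a multigraph. -/
def Connected (G : Multigraph V E) : Prop :=
  Nonempty V ∧ ∀ u v : V, Nonempty (G.Walk u v)

/-- Reachability in `G` avoiding the vertex set `X`. -/
def ReachAvoid (G : Multigraph V E) (X : Set V) (u v : V) : Prop :=
  ∃ p : G.Walk u v, ∀ x ∈ p.support, x ∉ X

/-- The underlying simple graph of a multigraph. -/
def toSimple (G : Multigraph V E) : SimpleGraph V where
  Adj u v := u ≠ v ∧ ∃ e, G.ends e = s(u, v)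
  symm := ⟨by
    rintro u v ⟨h, e, he⟩
    exact ⟨h.symm, e, by rw [he, Sym2.eq_swap]⟩⟩
  loopless := ⟨fun v h => h.1 rfl⟩

end Multigraph

section Minor

/-- `A` is a minor of `B` (branch-set/minor-model definition). -/
def SimpleGraphMinorOf {α β : Type} (A : SimpleGraph α) (B : SimpleGraph β) : Prop :=
  ∃ C : α → Set β,
    (∀ a, (C a).Nonempty) ∧
    (∀ a, (B.induce (C a)).Connected) ∧
    (Pairwise fun a a' => Disjoint (C a) (C a')) ∧
    (∀ a a', A.Adj a a' → ∃ x ∈ C a, ∃ y ∈ C a', B.Adj x y)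

end Minor

namespace Multigraph

variable {V E : Type}

/-- Planarity of a loopless multigraph, via Wagner's theorem: no `K₅` and
no `K₃,₃` minor in the underlying simple graph. -/
def Planar (G : Multigraph V E) : Prop :=
  ¬ SimpleGraphMinorOf (SimpleGraph.completeGraph (Fin 5)) G.toSimple ∧
  ¬ SimpleGraphMinorOf (completeBipartiteGraph (Fin 3) (Fin 3)) G.toSimple

lemma isDiag_map_inl {α β : Type} (p : Sym2 α) :
    (p.map (Sum.inl : α → α ⊕ β)).IsDiag ↔ p.IsDiag := by
  induction p using Sym2.ind with
  | _ a b => simp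

/-- `G⁺`: attach to every vertex `v` a gadget of two new vertices `(v,false)`,
`(v,true)` joined by a double edge, each joined to `v` by a single edge. -/
def plus (G : Multigraph V E) :
    Multigraph (V ⊕ (V × Bool)) (E ⊕ ((V × Fin 2) ⊕ (V × Bool))) where
  ends
    | .inl e => (G.ends e).map .inl
    | .inr (.inl (v, _)) => s(.inr (v, false), .inr (v, true))
    | .inr (.inr (v, b)) => s(.inl v, .inr (v, b))
  loopless := by
    rintro (e | ⟨v, i⟩ | ⟨v, b⟩) h
    · exact G.loopless e ((isDiag_map_inl _).1 h)
    · simp at h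
    · simp at h

/-- `G*`: attach, at every vertex `v` and for every `i ∈ {1,…,mdeg v}`, a gadget of two
new vertices joined by a double edge, each joined to `v` by a single edge. -/
noncomputable def star (G : Multigraph V E) [Fintype E] :
    Multigraph (V ⊕ ((Σ v : V, Fin (G.mdeg v)) × Bool))
      (E ⊕ (((Σ v : V, Fin (G.mdeg v)) × Fin 2) ⊕ ((Σ v : V, Fin (G.mdeg v)) × Bool))) where
  ends
    | .inl e => (G.ends e).map .inl
    | .inr (.inl (p, _)) => s(.inr (p, false), .inr (p, true))
    | .inr (.inr (p, b)) => s(.inl p.1, .inr (p, b))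
  loopless := by
    rintro (e | ⟨p, i⟩ | ⟨p, b⟩) h
    · exact G.loopless e ((isDiag_map_inl _).1 h)
    · simp at h
    · simp at h

/-- The subdivision of `G` in which the edge `e` (oriented from `src e` to `tgt e`)
is subdivided `n e` times, i.e. replaced by a path with `n e` internal vertices. -/
def subdivide (G : Multigraph V E) (src tgt : E → V)
    (hst : ∀ e, G.ends e = s(src e, tgt e)) (n : E → ℕ) :
    Multigraph (V ⊕ (Σ e : E, Fin (n e))) (Σ e : E, Fin (n e + 1)) where
  ends := fun q =>
    s(if _ : q.2.val = 0 then Sum.inl (src q.1)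
        else Sum.inr ⟨q.1, ⟨q.2.val - 1, by have := q.2.isLt; omega⟩⟩,
      if _ : q.2.val = n q.1 then Sum.inl (tgt q.1)
        else Sum.inr ⟨q.1, ⟨q.2.val, by have := q.2.isLt; omega⟩⟩)
  loopless := by
    rintro ⟨e, i⟩ h
    rw [Sym2.mk_isDiag_iff] at h
    split_ifs at h with h1 h2 h2 <;>
      first
        | exact Sum.noConfusion h
        | (have hl := G.loopless e
           rw [hst e, Sym2.mk_isDiag_iff] at hl
           exact hl (Sum.inl.inj h))
        | (have h3 := Sum.inr.inj h
           simp at h1 h3 <;> exact h1 (Fin.ext (by rw [Fin.val_zero]; omega)))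

end Multigraph

namespace Multigraph

/-- The multigraph underlying a simple graph. -/
def ofSimple {α : Type} (S : SimpleGraph α) : Multigraph α S.edgeSet where
  ends e := e.1
  loopless e := S.not_isDiag_of_mem_edgeSet e.2

/-- A strong immersion model: additionally, no branch vertex is an internal
vertex of a certifying path. -/
structure StrongImmersionModel {V1 E1 V E : Type} (H : Multigraph V1 E1) (G : Multigraph V E)
    extends ImmersionModel H G where
  not_internal : ∀ (e : E1) (x : V1), vmap x ∉ (path e).interior

/-- An `H`-topological-minor model in `G`: certifying paths are internally
vertex-disjoint and their internal vertices avoid the branch vertices. -/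
structure TopMinorModel {V1 E1 V E : Type} (H : Multigraph V1 E1) (G : Multigraph V E) where
  vmap : V1 → V
  vmap_inj : Function.Injective vmap
  src : E1 → V1
  tgt : E1 → V1
  ends_eq : ∀ e, H.ends e = s(src e, tgt e)
  path : ∀ e, G.Walk (vmap (src e)) (vmap (tgt e))
  path_isPath : ∀ e, (path e).IsPath
  internal_disjoint : ∀ e₁ e₂, e₁ ≠ e₂ → ∀ x, x ∈ (path e₁).interior → x ∉ (path e₂).support
  internal_avoid : ∀ (e : E1) (x : V1), vmap x ∉ (path e).interior

end Multigraph

section Walls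

/-- The `m × n` grid graph. -/
def gridGraph (m n : ℕ) : SimpleGraph (Fin m × Fin n) where
  Adj p q := (p.1 = q.1 ∧ (p.2.val + 1 = q.2.val ∨ q.2.val + 1 = p.2.val)) ∨
             (p.2 = q.2 ∧ (p.1.val + 1 = q.1.val ∨ q.1.val + 1 = p.1.val))
  symm := ⟨by rintro p q (⟨h, h'⟩ | ⟨h, h'⟩) <;> [left; right] <;> exact ⟨h.symm, h'.symm⟩⟩
  loopless := ⟨by rintro p (⟨-, h | h⟩ | ⟨-, h | h⟩) <;> omega⟩

/-- The `k×k` grid `Γ_k` as a multigraph. -/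
def Gamma (k : ℕ) : Multigraph (Fin k × Fin k) (gridGraph k k).edgeSet :=
  Multigraph.ofSimple (gridGraph k k)

/-- The `(k+1) × (2k+2)` grid with the vertical edges `{(x,y),(x+1,y)}` with `x+y` odd
(in 1-indexed coordinates) removed. -/
def wallPre (k : ℕ) : SimpleGraph (Fin (k + 1) × Fin (2 * k + 2)) where
  Adj p q := (gridGraph (k + 1) (2 * k + 2)).Adj p q ∧
    ¬ (p.2 = q.2 ∧ (min p.1.val q.1.val + p.2.val) % 2 = 1)
  symm := ⟨by
    rintro p q ⟨h, h'⟩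
    refine ⟨(gridGraph _ _).adj_symm h, fun ⟨hc, hp⟩ => h' ⟨hc.symm, ?_⟩⟩
    rw [Nat.min_comm] at hp
    rw [← hc]
    exact hp⟩
  loopless := ⟨fun p h => (gridGraph _ _).irrefl h.1⟩

/-- Degree of a vertex in `wallPre k`. -/
noncomputable def wallPreDeg (k : ℕ) (v : Fin (k + 1) × Fin (2 * k + 2)) : ℕ :=
  (Finset.univ.filter (fun w => (wallPre k).Adj v w)).card

/-- The vertex set of the `k`-wall: vertices of degree `≠ 1`. -/
def wallVerts (k : ℕ) : Set (Fin (k + 1) × Fin (2 * k + 2)) :=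
  {v | wallPreDeg k v ≠ 1}

/-- The `k`-wall `W_k`, as a simple graph. -/
noncomputable def wallSimple (k : ℕ) : SimpleGraph (wallVerts k) :=
  (wallPre k).induce (wallVerts k)

/-- The `k`-wall `W_k`, as a multigraph. -/
noncomputable def Wall (k : ℕ) : Multigraph (wallVerts k) (wallSimple k).edgeSet :=
  Multigraph.ofSimple (wallSimple k)

/-- The doubled edges of `W⁺_k`: the horizontal edges lying on both a vertical and a
horizontal path of the wall, i.e. those whose lower column index is odd (1-indexed). -/
def isDoubledEdge (k : ℕ) (p : Sym2 (wallVerts k)) : Prop :=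
  ∃ a b : wallVerts k, p = s(a, b) ∧ (a : Fin (k + 1) × Fin (2 * k + 2)).1 = (b : Fin (k + 1) × Fin (2 * k + 2)).1 ∧
    (b : Fin (k + 1) × Fin (2 * k + 2)).2.val = (a : Fin (k + 1) × Fin (2 * k + 2)).2.val + 1 ∧
    (a : Fin (k + 1) × Fin (2 * k + 2)).2.val % 2 = 0

/-- `W⁺_k`: the `k`-wall with a second parallel copy of every doubled edge. -/
noncomputable def WallPlus (k : ℕ) :
    Multigraph (wallVerts k)
      ((wallSimple k).edgeSet ⊕ {p : Sym2 (wallVerts k) // p ∈ (wallSimple k).edgeSet ∧ isDoubledEdge k p}) where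
  ends
    | .inl e => e.1
    | .inr e => e.1
  loopless := by
    rintro (e | e)
    · exact (wallSimple k).not_isDiag_of_mem_edgeSet e.2
    · exact (wallSimple k).not_isDiag_of_mem_edgeSet e.2.1

end Walls

namespace Multigraph

variable {V E : Type}

/-- Tree-partition width of a multigraph (bags may be empty; w.l.o.g. bags are
indexed by the vertices themselves). -/
noncomputable def tpw (G : Multigraph V E) [Fintype V] [Fintype E] : ℕ :=
  sInf {w | ∃ T : SimpleGraph V, T.IsTree ∧ ∃ bag : V → V,
    (Fintype.card V = 1 ∨
      ∀ (e : E) (a b : V), G.ends e = s(a, b) → bag a = bag b ∨ T.Adj (bag a) (bag b)) ∧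
    (∀ t : V, (Finset.univ.filter (fun v => bag v = t)).card ≤ w) ∧
    (∀ t t' : V, T.Adj t t' →
      (Finset.univ.filter (fun e : E =>
        ∃ a b, G.ends e = s(a, b) ∧ bag a = t ∧ bag b = t')).card ≤ w)}

section ThreeCenter

variable {W : Type} [Fintype W]

/-- Degree of `v` in the state `(A, m)`: `A` is the set of remaining vertices and
`m` gives edge multiplicities. -/
noncomputable def stDeg (A : Finset W) (m : Sym2 W → ℕ) (v : W) : ℕ :=
  ∑ w ∈ A.erase v, m s(v, w)

/-- One reduction step of the 3-center construction relative to the marked set `X`: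
delete a vertex of degree one, or suppress (dissolve) a vertex of degree two not in `X`. -/
inductive CStep (X : Set W) :
    Finset W × (Sym2 W → ℕ) → Finset W × (Sym2 W → ℕ) → Prop
  | delete (A : Finset W) (m : Sym2 W → ℕ) (v : W) (hv : v ∈ A) (hd : stDeg A m v = 1) :
      CStep X (A, m) (A.erase v, fun p => if v ∈ p then 0 else m p)
  | suppress (A : Finset W) (m : Sym2 W → ℕ) (v a b : W) (hv : v ∈ A) (hx : v ∉ X)
      (ha : a ∈ A) (hb : b ∈ A) (hav : a ≠ v) (hbv : b ≠ v) (hd : stDeg A m v = 2)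
      (h1 : 1 ≤ m s(v, a)) (h2 : a = b → m s(v, a) = 2) (h3 : a ≠ b → 1 ≤ m s(v, b)) :
      CStep X (A, m) (A.erase v,
        fun p => if v ∈ p then 0 else if a ≠ b ∧ p = s(a, b) then m p + 1 else m p)

/-- The number of vertices of the 3-center of the marked multigraph given by the
state `(A, m)` with marked set `X`: the size of a reduct on which no step applies. -/
noncomputable def centerSize (X : Set W) (A : Finset W) (m : Sym2 W → ℕ) : ℕ :=
  sInf {c | ∃ s : Finset W × (Sym2 W → ℕ),
    Relation.ReflTransGen (CStep X) (A, m) s ∧ (∀ s', ¬ CStep X s s') ∧ s.1.card = c}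

end ThreeCenter

section TCW

variable {n : ℕ}

/-- The consolidation map for the torso at node `t` of a tree-cut decomposition:
a vertex whose bag is `t` is kept, and any other vertex is sent to the peripheral
vertex indexed by the neighbour `u` of `t` whose branch contains its bag. -/
noncomputable def consMap (T : SimpleGraph (Fin n)) (bag : V → Fin n) (t : Fin n) (a : V) :
    V ⊕ Fin n :=
  if bag a = t then Sum.inl a
  else if h : ∃ u, T.Adj t u ∧ (T.deleteEdges {s(t, u)}).Reachable (bag a) u
    then Sum.inr h.choose else Sum.inl a

/-- The vertex set of the torso at `t`: the bag of `t` together with one peripheral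
vertex for each neighbour of `t` in the decomposition tree. -/
noncomputable def torsoA [Fintype V] (T : SimpleGraph (Fin n)) (bag : V → Fin n) (t : Fin n) :
    Finset (V ⊕ Fin n) :=
  (Finset.univ.filter (fun a : V => bag a = t)).image Sum.inl ∪
    (Finset.univ.filter (fun u : Fin n => T.Adj t u)).image Sum.inr

/-- The edge multiplicities of the torso at `t`. -/
noncomputable def torsoM (G : Multigraph V E) [Fintype E] (T : SimpleGraph (Fin n))
    (bag : V → Fin n) (t : Fin n) : Sym2 (V ⊕ Fin n) → ℕ :=
  fun p => if p.IsDiag then 0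
    else (Finset.univ.filter (fun e : E => (G.ends e).map (consMap T bag t) = p)).card

/-- The adhesion of the tree edge `{t, t'}`: the number of edges of `G` whose endpoints
lie in bags on different sides of the edge. -/
noncomputable def adhE (G : Multigraph V E) [Fintype E] (T : SimpleGraph (Fin n))
    (bag : V → Fin n) (t t' : Fin n) : ℕ :=
  (Finset.univ.filter (fun e : E => ∃ a b, G.ends e = s(a, b) ∧
    (T.deleteEdges {s(t, t')}).Reachable (bag a) t ∧
    (T.deleteEdges {s(t, t')}).Reachable (bag b) t')).card

/-- Tree-cut width of a multigraph: the minimum, over tree-cut decompositions, of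
the maximum of all adhesions and of the numbers of vertices of the 3-centers
of the torsos. -/
noncomputable def tcw (G : Multigraph V E) [Fintype V] [Fintype E] : ℕ :=
  sInf {w | ∃ (n : ℕ) (T : SimpleGraph (Fin n)), T.IsTree ∧ ∃ bag : V → Fin n,
    (∀ t t', T.Adj t t' → adhE G T bag t t' ≤ w) ∧
    (∀ t, centerSize (Sum.inl '' {a | bag a = t}) (torsoA T bag t) (torsoM G T bag t) ≤ w)}

end TCW

end Multigraph

/-! ### Auxiliary development for Statement 9 -/

namespace Multigraph

namespace Walk

variable {V E : Type} {G : Multigraph V E}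

lemma support_eq_cons : ∀ {u v : V} (p : G.Walk u v), p.support = u :: p.support.tail
  | _, _, .nil _ => rfl
  | _, _, .cons _ _ _ => rfl

def append : {u v w : V} → G.Walk u v → G.Walk v w → G.Walk u w
  | _, _, _, .nil _, q => q
  | _, _, _, .cons e he p, q => .cons e he (p.append q)

lemma support_append : ∀ {u v w : V} (p : G.Walk u v) (q : G.Walk v w),
    (p.append q).support = p.support ++ q.support.tail
  | _, _, _, .nil x, q => by
      simp only [append, support]
      exact support_eq_cons q
  | _, _, _, .cons e he p, q => by
      simp only [append, support, support_append p q, List.cons_append]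

lemma edges_append : ∀ {u v w : V} (p : G.Walk u v) (q : G.Walk v w),
    (p.append q).edges = p.edges ++ q.edges
  | _, _, _, .nil _, q => rfl
  | _, _, _, .cons e he p, q => by
      simp only [append, edges, edges_append p q, List.cons_append]

lemma start_mem_support {u v : V} (p : G.Walk u v) : u ∈ p.support := by
  rw [support_eq_cons]; exact List.mem_cons_self

lemma end_mem_support : ∀ {u v : V} (p : G.Walk u v), v ∈ p.support
  | _, _, .nil _ => List.mem_cons_self
  | _, _, .cons _ _ p => List.mem_cons_of_mem _ (end_mem_support p)

lemma mem_support_of_mem_ends : ∀ {u v : V} (p : G.Walk u v) {g : E},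
    g ∈ p.edges → ∀ {a : V}, a ∈ G.ends g → a ∈ p.support
  | _, _, .nil _, g, hg, a, _ => absurd hg List.not_mem_nil
  | _, _, .cons e he p, g, hg, a, ha => by
      rcases List.mem_cons.1 hg with rfl | hg
      · rw [he] at ha
        rcases Sym2.mem_iff.1 ha with rfl | rfl
        · exact start_mem_support _
        · exact List.mem_cons_of_mem _ (start_mem_support p)
      · exact List.mem_cons_of_mem _ (mem_support_of_mem_ends p hg ha)

lemma exists_edge_end : ∀ {u v : V} (p : G.Walk u v), u ≠ v → ∃ g ∈ p.edges, v ∈ G.ends g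
  | _, _, .nil _, h => absurd rfl h
  | _, _, .cons (v := w) (w := v) e he p, _ => by
      by_cases hwv : w = v
      · subst hwv
        exact ⟨e, List.mem_cons_self, by rw [he]; exact Sym2.mem_mk_right _ _⟩
      · obtain ⟨g, hg, hv⟩ := exists_edge_end p hwv
        exact ⟨g, List.mem_cons_of_mem _ hg, hv⟩

lemma exists_edge_start : ∀ {u v : V} (p : G.Walk u v), u ≠ v → ∃ g ∈ p.edges, u ∈ G.ends g
  | _, _, .nil _, h => absurd rfl h
  | _, _, .cons e he _, _ =>
      ⟨e, List.mem_cons_self, by rw [he]; exact Sym2.mem_mk_left _ _⟩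

lemma isPath_cons {u v w : V} {e : E} {he : G.ends e = s(u, v)} {p : G.Walk v w} :
    (Walk.cons e he p).IsPath ↔ u ∉ p.support ∧ p.IsPath := by
  simp [IsPath, support]

/-- Transfer a walk out of `deleteEdges`. -/
def ofDel {F : Set E} : ∀ {u v : V}, (G.deleteEdges F).Walk u v → G.Walk u v
  | _, _, .nil x => .nil x
  | _, _, .cons e he p => .cons e.1 he (ofDel p)

lemma support_ofDel {F : Set E} : ∀ {u v : V} (p : (G.deleteEdges F).Walk u v),
    (ofDel p).support = p.support
  | _, _, .nil _ => rfl
  | _, _, .cons e he p => by simp only [ofDel, support, support_ofDel p]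

lemma edges_ofDel {F : Set E} : ∀ {u v : V} (p : (G.deleteEdges F).Walk u v),
    (ofDel p).edges = p.edges.map Subtype.val
  | _, _, .nil _ => rfl
  | _, _, .cons e he p => by simp only [ofDel, edges, edges_ofDel p, List.map_cons]

/-- Transfer a walk into `deleteEdges`. -/
def toDel {F : Set E} : ∀ {u v : V} (p : G.Walk u v), (∀ x ∈ p.edges, x ∉ F) →
    (G.deleteEdges F).Walk u v
  | _, _, .nil x, _ => .nil x
  | _, _, .cons e he p, h =>
      .cons ⟨e, h e (List.mem_cons_self)⟩ he
        (toDel p fun x hx => h x (List.mem_cons_of_mem _ hx))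

lemma support_toDel {F : Set E} : ∀ {u v : V} (p : G.Walk u v)
    (h : ∀ x ∈ p.edges, x ∉ F), (toDel p h).support = p.support
  | _, _, .nil _, _ => rfl
  | _, _, .cons e he p, h => by simp only [toDel, support, support_toDel p]

lemma edges_toDel {F : Set E} : ∀ {u v : V} (p : G.Walk u v)
    (h : ∀ x ∈ p.edges, x ∉ F), (toDel p h).edges.map Subtype.val = p.edges
  | _, _, .nil _, _ => rfl
  | _, _, .cons e he p, h => by simp only [toDel, edges, List.map_cons, edges_toDel p]

end Walk

variable {V1 E1 V E : Type}

lemma immersed_deleteEdges_iff {H : Multigraph V1 E1} {G : Multigraph V E} {F : Set E} :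
    Immersed H (G.deleteEdges F) ↔ ∃ m : ImmersionModel H G, ∀ x ∈ m.edgeSet, x ∉ F := by
  constructor
  · rintro ⟨m⟩
    refine ⟨⟨m.vmap, m.vmap_inj, m.src, m.tgt, m.ends_eq, fun f => (m.path f).ofDel, ?_, ?_⟩, ?_⟩
    · intro f
      have h := m.path_isPath f
      unfold Walk.IsPath at h ⊢
      rwa [Walk.support_ofDel]
    · intro f₁ f₂ hne x hx1 hx2
      rw [Walk.edges_ofDel] at hx1 hx2
      obtain ⟨y1, hy1, rfl⟩ := List.mem_map.1 hx1
      obtain ⟨y2, hy2, hval⟩ := List.mem_map.1 hx2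
      exact m.edge_disjoint f₁ f₂ hne y1 hy1 ((Subtype.ext hval.symm : y1 = y2) ▸ hy2)
    · rintro x ⟨f, hx⟩
      rw [Walk.edges_ofDel] at hx
      obtain ⟨y, _, rfl⟩ := List.mem_map.1 hx
      exact y.2
  · rintro ⟨m, hm⟩
    have hpath : ∀ f, ∀ x ∈ (m.path f).edges, x ∉ F := fun f x hx => hm x ⟨f, hx⟩
    refine ⟨⟨m.vmap, m.vmap_inj, m.src, m.tgt, m.ends_eq,
      fun f => (m.path f).toDel (hpath f), ?_, ?_⟩⟩
    · intro f
      have h := m.path_isPath f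
      unfold Walk.IsPath at h ⊢
      rwa [Walk.support_toDel]
    · intro f₁ f₂ hne x hx1 hx2
      apply m.edge_disjoint f₁ f₂ hne x.val
      · rw [← Walk.edges_toDel (m.path f₁) (hpath f₁)]
        exact List.mem_map_of_mem hx1
      · rw [← Walk.edges_toDel (m.path f₂) (hpath f₂)]
        exact List.mem_map_of_mem hx2

section Subdivision

variable {V E : Type} (A : Multigraph V E) (src tgt : E → V)
  (hst : ∀ e, A.ends e = s(src e, tgt e)) (n : E → ℕ)

/-- The `i`-th vertex along the subdivided edge `e` (positions `0 … n e + 1`). -/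
def sPos (e : E) (i : ℕ) : V ⊕ (Σ e : E, Fin (n e)) :=
  if h0 : i = 0 then .inl (src e)
  else if h : i ≤ n e then .inr ⟨e, ⟨i - 1, by omega⟩⟩
  else .inl (tgt e)

lemma sPos_zero (e : E) : sPos src tgt n e 0 = .inl (src e) := by simp [sPos]

lemma sPos_top (e : E) : sPos src tgt n e (n e + 1) = .inl (tgt e) := by
  simp [sPos]

lemma sPos_inl (e : E) {i : ℕ} {w : V} (hi : i ≤ n e + 1)
    (h : sPos src tgt n e i = .inl w) :
    (i = 0 ∧ w = src e) ∨ (i = n e + 1 ∧ w = tgt e) := by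
  unfold sPos at h
  split_ifs at h with h1 h2
  · exact Or.inl ⟨h1, (Sum.inl.inj h).symm⟩
  · exact Or.inr ⟨by omega, (Sum.inl.inj h).symm⟩

lemma sPos_inr {e e' : E} {i : Fin (n e')} {k : ℕ}
    (h : sPos src tgt n e k = .inr ⟨e', i⟩) : e = e' ∧ k = i.val + 1 := by
  unfold sPos at h
  split_ifs at h with h1 h2
  · obtain ⟨rfl, h3⟩ := Sigma.mk.inj_iff.1 (Sum.inr.inj h)
    have h5 : k - 1 = i.val := congrArg Fin.val (eq_of_heq h3)
    exact ⟨rfl, by omega⟩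

lemma sPos_inj (e : E) (hne : src e ≠ tgt e) {i j : ℕ}
    (hi : i ≤ n e + 1) (hj : j ≤ n e + 1)
    (h : sPos src tgt n e i = sPos src tgt n e j) : i = j := by
  unfold sPos at h
  split_ifs at h with h1 h2 h3 h4 h5 h6 h7 <;>
    first
      | omega
      | (exact absurd (Sum.inl.inj h) hne)
      | (exact absurd (Sum.inl.inj h).symm hne)
      | (obtain ⟨-, h9⟩ := Sigma.mk.inj_iff.1 (Sum.inr.inj h)
         have h10 : i - 1 = j - 1 := congrArg Fin.val (eq_of_heq h9)
         omega)

lemma ends_subdivide (e : E) (j : Fin (n e + 1)) :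
    (A.subdivide src tgt hst n).ends ⟨e, j⟩ =
      s(sPos src tgt n e j.val, sPos src tgt n e (j.val + 1)) := by
  have hj := j.isLt
  have h1 : (A.subdivide src tgt hst n).ends ⟨e, j⟩ =
      s(if _ : j.val = 0 then Sum.inl (src e)
          else Sum.inr ⟨e, ⟨j.val - 1, by omega⟩⟩,
        if _ : j.val = n e then Sum.inl (tgt e)
          else Sum.inr ⟨e, ⟨j.val, by omega⟩⟩) := rfl
  rw [h1, Sym2.eq_iff]
  left
  constructor
  · unfold sPos
    by_cases h0 : j.val = 0
    · rw [dif_pos h0, dif_pos h0]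
    · rw [dif_neg h0, dif_neg h0, dif_pos (by omega : j.val ≤ n e)]
  · unfold sPos
    by_cases h0 : j.val = n e
    · rw [dif_pos h0, dif_neg (by omega : ¬ j.val + 1 = 0),
        dif_neg (by omega : ¬ j.val + 1 ≤ n e)]
    · rw [dif_neg h0, dif_neg (by omega : ¬ j.val + 1 = 0),
        dif_pos (by omega : j.val + 1 ≤ n e)]
      simp

lemma eq_of_mem_ends_inr {e0 : E} {j0 : Fin (n e0 + 1)} {e : E} {i : Fin (n e)}
    (h : Sum.inr ⟨e, i⟩ ∈ (A.subdivide src tgt hst n).ends ⟨e0, j0⟩) :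
    e0 = e ∧ (j0.val = i.val ∨ j0.val = i.val + 1) := by
  rw [ends_subdivide A src tgt hst n] at h
  rcases Sym2.mem_iff.1 h with h | h
  · obtain ⟨rfl, h2⟩ := sPos_inr src tgt n h.symm
    exact ⟨rfl, Or.inr h2⟩
  · obtain ⟨rfl, h2⟩ := sPos_inr src tgt n h.symm
    exact ⟨rfl, Or.inl (by omega)⟩

lemma mem_ends_inr_cases {f : Σ e : E, Fin (n e + 1)} {e : E} {i : Fin (n e)}
    (h : Sum.inr ⟨e, i⟩ ∈ (A.subdivide src tgt hst n).ends f) :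
    ∃ j : Fin (n e + 1), f = ⟨e, j⟩ ∧ (j.val = i.val ∨ j.val = i.val + 1) := by
  obtain ⟨e0, j0⟩ := f
  obtain ⟨heq, hj⟩ := eq_of_mem_ends_inr A src tgt hst n h
  subst heq
  exact ⟨j0, rfl, hj⟩

end Subdivision

lemma src_ne_tgt {V E : Type} (A : Multigraph V E) (src tgt : E → V)
    (hst : ∀ e, A.ends e = s(src e, tgt e)) (e : E) : src e ≠ tgt e := by
  intro h
  exact A.loopless e (by rw [hst e, h]; exact Sym2.mk_isDiag_iff.2 rfl)

namespace Walk

variable {V E : Type} {G : Multigraph V E}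

def copy {u v u' v' : V} (p : G.Walk u v) (hu : u = u') (hv : v = v') : G.Walk u' v' :=
  hu ▸ hv ▸ p

@[simp] lemma support_copy {u v u' v' : V} (p : G.Walk u v) (hu : u = u') (hv : v = v') :
    (p.copy hu hv).support = p.support := by subst hu; subst hv; rfl

@[simp] lemma edges_copy {u v u' v' : V} (p : G.Walk u v) (hu : u = u') (hv : v = v') :
    (p.copy hu hv).edges = p.edges := by subst hu; subst hv; rfl

end Walk

section Subdivision2

variable {V E : Type} (A : Multigraph V E) (src tgt : E → V)
  (hst : ∀ e, A.ends e = s(src e, tgt e)) (n : E → ℕ)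

lemma sPos_inr_val (e : E) (i : Fin (n e)) :
    sPos src tgt n e (i.val + 1) = .inr ⟨e, i⟩ := by
  have := i.isLt
  unfold sPos
  rw [dif_neg (by omega), dif_pos (by omega)]
  congr 1

/-- The forward segment walk along subdivided edge `e`, from position `k` to the end. -/
noncomputable def segFrom (e : E) : (k : ℕ) → (h : k ≤ n e + 1) →
    (A.subdivide src tgt hst n).Walk (sPos src tgt n e k) (sPos src tgt n e (n e + 1))
  | k, h =>
    if hk : k = n e + 1 then
      (Walk.nil (sPos src tgt n e (n e + 1))).copy (congrArg _ hk.symm) rfl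
    else
      Walk.cons ⟨e, ⟨k, by omega⟩⟩ (by rw [ends_subdivide])
        (segFrom e (k + 1) (by omega))
  termination_by k => n e + 1 - k

lemma segFrom_mem_support (e : E) : ∀ (m k : ℕ) (h : k ≤ n e + 1), n e + 1 - k = m →
    ∀ x, x ∈ (segFrom A src tgt hst n e k h).support ↔
      ∃ j, k ≤ j ∧ j ≤ n e + 1 ∧ x = sPos src tgt n e j := by
  intro m
  induction m with
  | zero =>
    intro k h hm x
    have hk : k = n e + 1 := by omega
    rw [segFrom, dif_pos hk, Walk.support_copy]
    constructor
    · intro hx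
      rcases List.mem_singleton.1 hx with rfl
      exact ⟨n e + 1, by omega, le_rfl, rfl⟩
    · rintro ⟨j, hj1, hj2, rfl⟩
      have : j = n e + 1 := by omega
      subst this
      exact List.mem_singleton.2 rfl
  | succ m ih =>
    intro k h hm x
    have hk : ¬ k = n e + 1 := by omega
    rw [segFrom, dif_neg hk]
    show x ∈ (sPos src tgt n e k) :: _ ↔ _
    rw [List.mem_cons, ih (k + 1) (by omega) (by omega)]
    constructor
    · rintro (rfl | ⟨j, hj1, hj2, rfl⟩)
      · exact ⟨k, le_rfl, by omega, rfl⟩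
      · exact ⟨j, by omega, hj2, rfl⟩
    · rintro ⟨j, hj1, hj2, rfl⟩
      rcases eq_or_lt_of_le hj1 with rfl | hlt
      · exact Or.inl rfl
      · exact Or.inr ⟨j, by omega, hj2, rfl⟩

lemma segFrom_mem_edges (e : E) : ∀ (m k : ℕ) (h : k ≤ n e + 1), n e + 1 - k = m →
    ∀ y, y ∈ (segFrom A src tgt hst n e k h).edges ↔
      ∃ j : Fin (n e + 1), k ≤ j.val ∧ y = ⟨e, j⟩ := by
  intro m
  induction m with
  | zero =>
    intro k h hm y
    have hk : k = n e + 1 := by omega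
    rw [segFrom, dif_pos hk, Walk.edges_copy]
    simp only [Walk.edges, List.not_mem_nil, false_iff]
    rintro ⟨j, hj1, rfl⟩
    have := j.isLt
    omega
  | succ m ih =>
    intro k h hm y
    have hk : ¬ k = n e + 1 := by omega
    rw [segFrom, dif_neg hk]
    show y ∈ (⟨e, ⟨k, by omega⟩⟩ : Σ e, Fin (n e + 1)) :: _ ↔ _
    rw [List.mem_cons, ih (k + 1) (by omega) (by omega)]
    constructor
    · rintro (rfl | ⟨j, hj1, rfl⟩)
      · exact ⟨⟨k, by omega⟩, le_rfl, rfl⟩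
      · exact ⟨j, by omega, rfl⟩
    · rintro ⟨j, hj1, rfl⟩
      rcases eq_or_lt_of_le hj1 with heq | hlt
      · exact Or.inl (by congr 1; exact Fin.ext heq.symm)
      · exact Or.inr ⟨j, by omega, rfl⟩

lemma segFrom_nodup (e : E) (hne : src e ≠ tgt e) :
    ∀ (m k : ℕ) (h : k ≤ n e + 1), n e + 1 - k = m →
    (segFrom A src tgt hst n e k h).support.Nodup := by
  intro m
  induction m with
  | zero =>
    intro k h hm
    have hk : k = n e + 1 := by omega
    rw [segFrom, dif_pos hk, Walk.support_copy]
    exact List.nodup_singleton _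
  | succ m ih =>
    intro k h hm
    have hk : ¬ k = n e + 1 := by omega
    rw [segFrom, dif_neg hk]
    show ((sPos src tgt n e k) :: _).Nodup
    refine List.nodup_cons.2 ⟨?_, ih (k + 1) (by omega) (by omega)⟩
    intro hx
    rw [segFrom_mem_support A src tgt hst n e (n e + 1 - (k + 1)) (k + 1) (by omega) rfl] at hx
    obtain ⟨j, hj1, hj2, hj3⟩ := hx
    have := sPos_inj src tgt n e hne (by omega) hj2 hj3
    omega

/-- The backward segment walk along subdivided edge `e`, from position `k` down to `0`. -/
noncomputable def segRevFrom (e : E) : (k : ℕ) → (h : k ≤ n e + 1) →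
    (A.subdivide src tgt hst n).Walk (sPos src tgt n e k) (sPos src tgt n e 0)
  | 0, _ => Walk.nil _
  | k + 1, h =>
    Walk.cons ⟨e, ⟨k, by omega⟩⟩
      (by rw [ends_subdivide]; exact Sym2.eq_swap)
      (segRevFrom e k (by omega))

lemma segRevFrom_mem_support (e : E) : ∀ (k : ℕ) (h : k ≤ n e + 1) (x),
    x ∈ (segRevFrom A src tgt hst n e k h).support ↔
      ∃ j, j ≤ k ∧ x = sPos src tgt n e j := by
  intro k
  induction k with
  | zero =>
    intro h x
    constructor
    · intro hx
      rcases List.mem_singleton.1 hx with rfl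
      exact ⟨0, le_rfl, rfl⟩
    · rintro ⟨j, hj, rfl⟩
      have : j = 0 := by omega
      subst this
      exact List.mem_singleton.2 rfl
  | succ k ih =>
    intro h x
    show x ∈ (sPos src tgt n e (k + 1)) :: _ ↔ _
    rw [List.mem_cons, ih (by omega)]
    constructor
    · rintro (rfl | ⟨j, hj, rfl⟩)
      · exact ⟨k + 1, le_rfl, rfl⟩
      · exact ⟨j, by omega, rfl⟩
    · rintro ⟨j, hj, rfl⟩
      rcases Nat.eq_or_lt_of_le hj with heq | hlt
      · exact Or.inl (by rw [heq])
      · exact Or.inr ⟨j, by omega, rfl⟩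

lemma segRevFrom_mem_edges (e : E) : ∀ (k : ℕ) (h : k ≤ n e + 1) (y),
    y ∈ (segRevFrom A src tgt hst n e k h).edges ↔
      ∃ j : Fin (n e + 1), j.val < k ∧ y = ⟨e, j⟩ := by
  intro k
  induction k with
  | zero =>
    intro h y
    simp only [segRevFrom, Walk.edges, List.not_mem_nil, false_iff]
    rintro ⟨j, hj, rfl⟩
    omega
  | succ k ih =>
    intro h y
    show y ∈ (⟨e, ⟨k, by omega⟩⟩ : Σ e, Fin (n e + 1)) :: _ ↔ _
    rw [List.mem_cons, ih (by omega)]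
    constructor
    · rintro (rfl | ⟨j, hj, rfl⟩)
      · exact ⟨⟨k, by omega⟩, Nat.lt_succ_self k, rfl⟩
      · exact ⟨j, by omega, rfl⟩
    · rintro ⟨j, hj, rfl⟩
      rcases Nat.lt_succ_iff_lt_or_eq.1 hj with hlt | heq
      · exact Or.inr ⟨j, hlt, rfl⟩
      · exact Or.inl (by congr 1; exact Fin.ext heq)

lemma segRevFrom_nodup (e : E) (hne : src e ≠ tgt e) :
    ∀ (k : ℕ) (h : k ≤ n e + 1),
    (segRevFrom A src tgt hst n e k h).support.Nodup := by
  intro k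
  induction k with
  | zero => exact fun h => List.nodup_singleton _
  | succ k ih =>
    intro h
    show ((sPos src tgt n e (k + 1)) :: _).Nodup
    refine List.nodup_cons.2 ⟨?_, ih (by omega)⟩
    intro hx
    rw [segRevFrom_mem_support A src tgt hst n e k (by omega)] at hx
    obtain ⟨j, hj, hj2⟩ := hx
    have := sPos_inj src tgt n e hne (by omega) (by omega) hj2
    omega

/-- An oriented full segment walk realizing the edge `e` in the subdivision. -/
lemma exists_segO (e : E) {u w : V} (he : A.ends e = s(u, w)) :
    ∃ r : (A.subdivide src tgt hst n).Walk (.inl u) (.inl w),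
      r.support.Nodup ∧ (∀ y, y ∈ r.edges ↔ y.1 = e) ∧
      (∀ x, x ∈ r.support ↔ x = .inl u ∨ x = .inl w ∨ ∃ i : Fin (n e), x = .inr ⟨e, i⟩) := by
  have hne := src_ne_tgt A src tgt hst e
  have hsw : s(src e, tgt e) = s(u, w) := (hst e).symm.trans he
  have hiff : ∀ x, (∃ j, j ≤ n e + 1 ∧ x = sPos src tgt n e j) ↔
      (x = Sum.inl (src e) ∨ x = Sum.inl (tgt e) ∨ ∃ i : Fin (n e), x = .inr ⟨e, i⟩) := by
    intro x
    constructor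
    · rintro ⟨j, hj, rfl⟩
      rcases Nat.eq_zero_or_pos j with rfl | hj0
      · exact Or.inl (sPos_zero src tgt n e)
      · rcases Nat.lt_or_ge j (n e + 1) with hjlt | hjge
        · refine Or.inr (Or.inr ⟨⟨j - 1, by omega⟩, ?_⟩)
          have := sPos_inr_val src tgt n e ⟨j - 1, by omega⟩
          simp only at this
          rw [← this]
          congr 1
          omega
        · have : j = n e + 1 := by omega
          subst this
          exact Or.inr (Or.inl (sPos_top src tgt n e))
    · rintro (rfl | rfl | ⟨i, rfl⟩)
      · exact ⟨0, by omega, (sPos_zero src tgt n e).symm⟩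
      · exact ⟨n e + 1, le_rfl, (sPos_top src tgt n e).symm⟩
      · exact ⟨i.val + 1, by have := i.isLt; omega, (sPos_inr_val src tgt n e i).symm⟩
  rcases Sym2.eq_iff.mp hsw with ⟨h1, h2⟩ | ⟨h1, h2⟩
  · refine ⟨(segFrom A src tgt hst n e 0 (by omega)).copy
      (by rw [sPos_zero, h1]) (by rw [sPos_top, h2]), ?_, ?_, ?_⟩
    · rw [Walk.support_copy]
      exact segFrom_nodup A src tgt hst n e hne (n e + 1) 0 (by omega) rfl
    · intro y
      rw [Walk.edges_copy,
        segFrom_mem_edges A src tgt hst n e (n e + 1) 0 (by omega) rfl]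
      constructor
      · rintro ⟨j, _, rfl⟩; rfl
      · intro hy
        obtain ⟨g, j⟩ := y
        cases hy
        exact ⟨j, by omega, rfl⟩
    · intro x
      rw [Walk.support_copy,
        segFrom_mem_support A src tgt hst n e (n e + 1) 0 (by omega) rfl]
      rw [show (∃ j, 0 ≤ j ∧ j ≤ n e + 1 ∧ x = sPos src tgt n e j) ↔
          (∃ j, j ≤ n e + 1 ∧ x = sPos src tgt n e j) by
        constructor
        · rintro ⟨j, _, hj, rfl⟩; exact ⟨j, hj, rfl⟩
        · rintro ⟨j, hj, rfl⟩; exact ⟨j, by omega, hj, rfl⟩]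
      rw [hiff, h1, h2]
  · refine ⟨(segRevFrom A src tgt hst n e (n e + 1) le_rfl).copy
      (by rw [sPos_top, h2]) (by rw [sPos_zero, h1]), ?_, ?_, ?_⟩
    · rw [Walk.support_copy]
      exact segRevFrom_nodup A src tgt hst n e hne (n e + 1) le_rfl
    · intro y
      rw [Walk.edges_copy, segRevFrom_mem_edges A src tgt hst n e (n e + 1) le_rfl]
      constructor
      · rintro ⟨j, _, rfl⟩; rfl
      · intro hy
        obtain ⟨g, j⟩ := y
        cases hy
        exact ⟨j, j.isLt, rfl⟩
    · intro x
      rw [Walk.support_copy, segRevFrom_mem_support A src tgt hst n e (n e + 1) le_rfl]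
      rw [hiff, h1, h2]
      tauto

/-- Expansion of a path of `A` to a path of the subdivision. -/
lemma exists_expand : ∀ {u v : V} (p : A.Walk u v), p.IsPath →
    ∃ q : (A.subdivide src tgt hst n).Walk (.inl u) (.inl v),
      q.IsPath ∧ (∀ y, y ∈ q.edges ↔ y.1 ∈ p.edges) ∧
      (∀ x, x ∈ q.support → (∃ a, x = Sum.inl a ∧ a ∈ p.support) ∨
        ∃ (g : E) (i : Fin (n g)), x = Sum.inr ⟨g, i⟩ ∧ g ∈ p.edges)
  | _, _, .nil x, _ => by
    refine ⟨Walk.nil (Sum.inl x), List.nodup_singleton _, ?_, ?_⟩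
    · intro y
      show y ∈ ([] : List _) ↔ y.1 ∈ ([] : List E)
      simp
    · intro z hz
      rcases List.mem_singleton.1 hz with rfl
      exact Or.inl ⟨x, rfl, List.mem_singleton.2 rfl⟩
  | _, _, .cons (u := u) (v := w) (w := v) e he p, hp => by
    rw [Walk.isPath_cons] at hp
    obtain ⟨hu, hp2⟩ := hp
    obtain ⟨q', hq'p, hq'e, hq's⟩ := exists_expand p hp2
    obtain ⟨r, hrnd, hre, hrs⟩ := exists_segO A src tgt hst n e he
    have humem : u ∈ A.ends e := by rw [he]; exact Sym2.mem_mk_left _ _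
    refine ⟨r.append q', ?_, ?_, ?_⟩
    · show (Walk.append r q').support.Nodup
      rw [Walk.support_append, List.nodup_append]
      have hnd : q'.support.Nodup := hq'p
      refine ⟨hrnd, hnd.tail, ?_⟩
      intro x hxr y hxt hxy
      subst hxy
      have hxq' : x ∈ q'.support := List.mem_of_mem_tail hxt
      rcases (hrs x).1 hxr with rfl | rfl | ⟨i, rfl⟩
      · rcases hq's _ hxq' with ⟨a, hxa, hmem⟩ | ⟨g, i, hxa, -⟩
        · cases Sum.inl.inj hxa
          exact hu hmem
        · exact Sum.inl_ne_inr hxa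
      · rw [Walk.support_eq_cons q'] at hnd
        exact (List.nodup_cons.1 hnd).1 hxt
      · rcases hq's _ hxq' with ⟨a, hxa, -⟩ | ⟨g, i', hxa, hg⟩
        · exact Sum.inr_ne_inl hxa
        · obtain ⟨rfl, -⟩ := Sigma.mk.inj_iff.1 (Sum.inr.inj hxa)
          exact hu (Walk.mem_support_of_mem_ends p hg humem)
    · intro y
      rw [Walk.edges_append, List.mem_append, hre y, hq'e y]
      show _ ↔ y.1 ∈ e :: p.edges
      rw [List.mem_cons]
    · intro x hx
      rw [Walk.support_append, List.mem_append] at hx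
      rcases hx with hxr | hxt
      · rcases (hrs x).1 hxr with rfl | rfl | ⟨i, rfl⟩
        · exact Or.inl ⟨u, rfl, List.mem_cons_self⟩
        · exact Or.inl ⟨w, rfl, List.mem_cons_of_mem _ (Walk.start_mem_support p)⟩
        · exact Or.inr ⟨e, i, rfl, List.mem_cons_self⟩
      · rcases hq's _ (List.mem_of_mem_tail hxt) with ⟨a, hxa, hmem⟩ | ⟨g, i, hxa, hg⟩
        · exact Or.inl ⟨a, hxa, List.mem_cons_of_mem _ hmem⟩
        · exact Or.inr ⟨g, i, hxa, List.mem_cons_of_mem _ hg⟩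

lemma consume_fwd (e : E) {v : V} : ∀ (N : ℕ) (k : ℕ), 1 ≤ k → k ≤ n e + 1 →
    ∀ {x} (q : (A.subdivide src tgt hst n).Walk x (.inl v)), x = sPos src tgt n e k →
    q.edges.length ≤ N → q.support.Nodup →
    sPos src tgt n e (k - 1) ∉ q.support →
    ∃ q' : (A.subdivide src tgt hst n).Walk (.inl (tgt e)) (.inl v),
      (∃ L, q.support = L ++ q'.support ∧
        ∀ x' ∈ L, ∃ j, 1 ≤ j ∧ j ≤ n e ∧ x' = sPos src tgt n e j) ∧
      ∃ M, q.edges = M ++ q'.edges ∧ (∀ y ∈ M, y.1 = e) ∧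
        ∀ j : Fin (n e + 1), k ≤ j.val → ⟨e, j⟩ ∈ M := by
  have hne := src_ne_tgt A src tgt hst e
  intro N
  induction N with
  | zero =>
    intro k hk1 hk2 x q hx hlen hnd hprev
    by_cases hk : k = n e + 1
    · subst hx
      refine ⟨q.copy (by rw [hk, sPos_top]) rfl, ⟨[], ?_, by simp⟩,
        ⟨[], ?_, by simp, ?_⟩⟩
      · rw [Walk.support_copy, List.nil_append]
      · rw [Walk.edges_copy, List.nil_append]
      · intro j hj
        have := j.isLt
        omega
    · exfalso
      cases q with
      | nil =>
        rcases sPos_inl src tgt n e hk2 hx.symm with ⟨h1, -⟩ | ⟨h1, -⟩ <;> omega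
      | cons f hf q₂ =>
        simp only [Walk.edges, List.length_cons] at hlen
        omega
  | succ N ih =>
    intro k hk1 hk2 x q hx hlen hnd hprev
    by_cases hk : k = n e + 1
    · subst hx
      refine ⟨q.copy (by rw [hk, sPos_top]) rfl, ⟨[], ?_, by simp⟩,
        ⟨[], ?_, by simp, ?_⟩⟩
      · rw [Walk.support_copy, List.nil_append]
      · rw [Walk.edges_copy, List.nil_append]
      · intro j hj
        have := j.isLt
        omega
    · cases q with
      | nil =>
        exfalso
        rcases sPos_inl src tgt n e hk2 hx.symm with ⟨h1, -⟩ | ⟨h1, -⟩ <;> omega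
      | @cons _ z _ f hf q₂ =>
        have hxval : x = Sum.inr ⟨e, ⟨k - 1, by omega⟩⟩ := by
          have h0 := sPos_inr_val src tgt n e ⟨k - 1, by omega⟩
          rw [show k - 1 + 1 = k by omega] at h0
          exact hx.trans h0
        have hmem : Sum.inr (⟨e, ⟨k - 1, by omega⟩⟩ : Σ e, Fin (n e)) ∈
            (A.subdivide src tgt hst n).ends f := by
          rw [hf, ← hxval]
          exact Sym2.mem_mk_left _ _
        obtain ⟨j0, rfl, hj0⟩ := mem_ends_inr_cases A src tgt hst n hmem
        have hvv : (⟨k - 1, by omega⟩ : Fin (n e)).val = k - 1 := rfl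
        rw [hvv, show k - 1 + 1 = k by omega] at hj0
        have hf' : s(sPos src tgt n e j0.val, sPos src tgt n e (j0.val + 1)) = s(x, z) :=
          (ends_subdivide A src tgt hst n e j0).symm.trans hf
        simp only [Walk.edges, List.length_cons] at hlen
        simp only [Walk.support] at hnd hprev
        have hnd2 := List.nodup_cons.1 hnd
        have hj0lt := j0.isLt
        rcases hj0 with hj0 | hj0
        · -- came from below: impossible since previous vertex is excluded
          exfalso
          rw [hj0, show k - 1 + 1 = k by omega, ← hx] at hf'
          rcases Sym2.eq_iff.1 hf' with ⟨ha, hb⟩ | ⟨ha, hb⟩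
          · rw [hx] at ha
            have := sPos_inj src tgt n e hne (by omega) hk2 ha
            omega
          · apply hprev
            rw [ha]
            exact List.mem_cons_of_mem _ (Walk.start_mem_support q₂)
        · -- continue forward
          have hz : z = sPos src tgt n e (k + 1) := by
            rw [hj0, ← hx] at hf'
            rcases Sym2.eq_iff.1 hf' with ⟨-, hb⟩ | ⟨ha, hb⟩
            · exact hb.symm
            · exfalso
              rw [hx] at hb
              have := sPos_inj src tgt n e hne (by omega) hk2 hb
              omega
          have hprev2 : sPos src tgt n e (k + 1 - 1) ∉ q₂.support := by
            rw [show k + 1 - 1 = k by omega, ← hx]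
            exact hnd2.1
          obtain ⟨q', ⟨L, hL1, hL2⟩, ⟨M, hM1, hM2, hM3⟩⟩ :=
            ih (k + 1) (by omega) (by omega) q₂ hz (by omega) hnd2.2 hprev2
          refine ⟨q', ⟨x :: L, ?_, ?_⟩, ⟨⟨e, j0⟩ :: M, ?_, ?_, ?_⟩⟩
          · simp only [Walk.support, hL1, List.cons_append]
          · intro x' hx'
            rcases List.mem_cons.1 hx' with rfl | hx'
            · exact ⟨k, hk1, by omega, hx⟩
            · exact hL2 x' hx'
          · simp only [Walk.edges, hM1, List.cons_append]
          · intro y hy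
            rcases List.mem_cons.1 hy with rfl | hy
            · rfl
            · exact hM2 y hy
          · intro j hj
            rcases Nat.eq_or_lt_of_le hj with heq | hlt
            · have : j = j0 := Fin.ext (by omega)
              rw [this]
              exact List.mem_cons_self
            · exact List.mem_cons_of_mem _ (hM3 j (by omega))

lemma consume_bwd (e : E) {v : V} : ∀ (N : ℕ) (k : ℕ), k ≤ n e →
    ∀ {x} (q : (A.subdivide src tgt hst n).Walk x (.inl v)), x = sPos src tgt n e k →
    q.edges.length ≤ N → q.support.Nodup →
    sPos src tgt n e (k + 1) ∉ q.support →
    ∃ q' : (A.subdivide src tgt hst n).Walk (.inl (src e)) (.inl v),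
      (∃ L, q.support = L ++ q'.support ∧
        ∀ x' ∈ L, ∃ j, 1 ≤ j ∧ j ≤ n e ∧ x' = sPos src tgt n e j) ∧
      ∃ M, q.edges = M ++ q'.edges ∧ (∀ y ∈ M, y.1 = e) ∧
        ∀ j : Fin (n e + 1), j.val < k → ⟨e, j⟩ ∈ M := by
  have hne := src_ne_tgt A src tgt hst e
  intro N
  induction N with
  | zero =>
    intro k hk2 x q hx hlen hnd hprev
    by_cases hk : k = 0
    · subst hx
      refine ⟨q.copy (by rw [hk, sPos_zero]) rfl, ⟨[], ?_, by simp⟩,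
        ⟨[], ?_, by simp, ?_⟩⟩
      · rw [Walk.support_copy, List.nil_append]
      · rw [Walk.edges_copy, List.nil_append]
      · intro j hj
        omega
    · exfalso
      cases q with
      | nil =>
        rcases sPos_inl src tgt n e (by omega) hx.symm with ⟨h1, -⟩ | ⟨h1, -⟩ <;> omega
      | cons f hf q₂ =>
        simp only [Walk.edges, List.length_cons] at hlen
        omega
  | succ N ih =>
    intro k hk2 x q hx hlen hnd hprev
    by_cases hk : k = 0
    · subst hx
      refine ⟨q.copy (by rw [hk, sPos_zero]) rfl, ⟨[], ?_, by simp⟩,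
        ⟨[], ?_, by simp, ?_⟩⟩
      · rw [Walk.support_copy, List.nil_append]
      · rw [Walk.edges_copy, List.nil_append]
      · intro j hj
        omega
    · cases q with
      | nil =>
        exfalso
        rcases sPos_inl src tgt n e (by omega) hx.symm with ⟨h1, -⟩ | ⟨h1, -⟩ <;> omega
      | @cons _ z _ f hf q₂ =>
        have hxval : x = Sum.inr ⟨e, ⟨k - 1, by omega⟩⟩ := by
          have h0 := sPos_inr_val src tgt n e ⟨k - 1, by omega⟩
          rw [show k - 1 + 1 = k by omega] at h0
          exact hx.trans h0
        have hmem : Sum.inr (⟨e, ⟨k - 1, by omega⟩⟩ : Σ e, Fin (n e)) ∈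
            (A.subdivide src tgt hst n).ends f := by
          rw [hf, ← hxval]
          exact Sym2.mem_mk_left _ _
        obtain ⟨j0, rfl, hj0⟩ := mem_ends_inr_cases A src tgt hst n hmem
        have hvv : (⟨k - 1, by omega⟩ : Fin (n e)).val = k - 1 := rfl
        rw [hvv, show k - 1 + 1 = k by omega] at hj0
        have hf' : s(sPos src tgt n e j0.val, sPos src tgt n e (j0.val + 1)) = s(x, z) :=
          (ends_subdivide A src tgt hst n e j0).symm.trans hf
        simp only [Walk.edges, List.length_cons] at hlen
        simp only [Walk.support] at hnd hprev
        have hnd2 := List.nodup_cons.1 hnd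
        have hj0lt := j0.isLt
        rcases hj0 with hj0 | hj0
        · -- continue downward
          have hz : z = sPos src tgt n e (k - 1) := by
            rw [hj0, show k - 1 + 1 = k by omega, ← hx] at hf'
            rcases Sym2.eq_iff.1 hf' with ⟨ha, hb⟩ | ⟨ha, hb⟩
            · exfalso
              rw [hx] at ha
              have := sPos_inj src tgt n e hne (by omega) (by omega) ha
              omega
            · exact ha.symm
          have hprev2 : sPos src tgt n e (k - 1 + 1) ∉ q₂.support := by
            rw [show k - 1 + 1 = k by omega, ← hx]
            exact hnd2.1
          obtain ⟨q', ⟨L, hL1, hL2⟩, ⟨M, hM1, hM2, hM3⟩⟩ :=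
            ih (k - 1) (by omega) q₂ hz (by omega) hnd2.2 hprev2
          refine ⟨q', ⟨x :: L, ?_, ?_⟩, ⟨⟨e, j0⟩ :: M, ?_, ?_, ?_⟩⟩
          · simp only [Walk.support, hL1, List.cons_append]
          · intro x' hx'
            rcases List.mem_cons.1 hx' with rfl | hx'
            · exact ⟨k, by omega, by omega, hx⟩
            · exact hL2 x' hx'
          · simp only [Walk.edges, hM1, List.cons_append]
          · intro y hy
            rcases List.mem_cons.1 hy with rfl | hy
            · rfl
            · exact hM2 y hy
          · intro j hj
            rcases Nat.lt_or_ge j.val (k - 1) with hlt | hge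
            · exact List.mem_cons_of_mem _ (hM3 j hlt)
            · have : j = j0 := Fin.ext (by omega)
              rw [this]
              exact List.mem_cons_self
        · -- came from above: impossible since next-up vertex is excluded
          exfalso
          rw [hj0, ← hx] at hf'
          rcases Sym2.eq_iff.1 hf' with ⟨ha, hb⟩ | ⟨ha, hb⟩
          · apply hprev
            rw [hb]
            exact List.mem_cons_of_mem _ (Walk.start_mem_support q₂)
          · rw [hx] at hb
            have := sPos_inj src tgt n e hne (by omega) (by omega) hb
            omega

lemma filterMap_getLeft?_inl {α β : Type} (a : α) (l : List (α ⊕ β)) :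
    (Sum.inl a :: l).filterMap Sum.getLeft? = a :: l.filterMap Sum.getLeft? := by simp

/-- Contraction of a path of the subdivision to a path of `A`. -/
lemma exists_contract : ∀ (N : ℕ) {x y} (q : (A.subdivide src tgt hst n).Walk x y),
    q.edges.length ≤ N → q.support.Nodup → ∀ {u v : V}, x = .inl u → y = .inl v →
    ∃ p : A.Walk u v, p.support = q.support.filterMap Sum.getLeft? ∧
      (∀ g ∈ p.edges, ∀ j : Fin (n g + 1), (⟨g, j⟩ : Σ e, Fin (n e + 1)) ∈ q.edges) ∧
      (∀ z ∈ q.edges, z.1 ∈ p.edges) := by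
  intro N
  induction N with
  | zero =>
    intro x y q hlen hnd u v hx hy
    subst hx; subst hy
    cases q with
    | nil =>
      refine ⟨Walk.nil _, by simp [Walk.support], by simp [Walk.edges], by simp [Walk.edges]⟩
    | cons f hf q₂ =>
      exfalso
      simp only [Walk.edges, List.length_cons] at hlen
      omega
  | succ N ih =>
    intro x y q hlen hnd u v hx hy
    subst hx; subst hy
    cases q with
    | nil =>
      refine ⟨Walk.nil _, by simp [Walk.support], by simp [Walk.edges], by simp [Walk.edges]⟩
    | @cons _ z _ f hf q₂ =>
      obtain ⟨e0, j0⟩ := f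
      have hne := src_ne_tgt A src tgt hst e0
      have hj0lt := j0.isLt
      have hf' : s(sPos src tgt n e0 j0.val, sPos src tgt n e0 (j0.val + 1)) =
          s(Sum.inl u, z) := (ends_subdivide A src tgt hst n e0 j0).symm.trans hf
      simp only [Walk.edges, List.length_cons] at hlen
      simp only [Walk.support] at hnd
      have hnd2 := List.nodup_cons.1 hnd
      rcases Sym2.eq_iff.1 hf' with ⟨h1, h2⟩ | ⟨h1, h2⟩
      · -- forward traversal of e0 from its source
        rcases sPos_inl src tgt n e0 (by omega) h1 with ⟨hj00, hu⟩ | ⟨hj00, hu⟩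
        swap
        · exact absurd hj00 (by omega)
        have hz : z = sPos src tgt n e0 1 := by
          rw [hj00] at h2
          exact h2.symm
        have hprevf : sPos src tgt n e0 (1 - 1) ∉ q₂.support := by
          rw [show (1 : ℕ) - 1 = 0 by omega, sPos_zero, ← hu]
          exact hnd2.1
        obtain ⟨q', ⟨L, hL1, hL2⟩, ⟨M, hM1, hM2, hM3⟩⟩ :=
          consume_fwd A src tgt hst n e0 N 1 le_rfl (by omega) q₂ hz (by omega)
            hnd2.2 hprevf
        have hq'len : q'.edges.length ≤ N := by
          have := congrArg List.length hM1
          rw [List.length_append] at this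
          omega
        have hq'nd : q'.support.Nodup := by
          have h := hnd2.2
          rw [hL1] at h
          exact (List.nodup_append.1 h).2.1
        obtain ⟨p', hp's, hp'full, hp'conv⟩ := ih q' hq'len hq'nd rfl rfl
        have hLnil : L.filterMap Sum.getLeft? = [] := by
          rw [List.filterMap_eq_nil_iff]
          intro a ha
          obtain ⟨j, hj1, hj2, rfl⟩ := hL2 a ha
          have h0 := sPos_inr_val src tgt n e0 ⟨j - 1, by omega⟩
          rw [show j - 1 + 1 = j by omega] at h0
          rw [h0]
          rfl
        refine ⟨Walk.cons e0 (show A.ends e0 = s(u, tgt e0) by rw [hst e0, hu]) p', ?_, ?_, ?_⟩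
        · simp only [Walk.support]
          rw [hL1, filterMap_getLeft?_inl, List.filterMap_append, hLnil, hp's,
            List.nil_append]
        · intro g hg j
          simp only [Walk.edges] at hg ⊢
          rcases List.mem_cons.1 hg with rfl | hg
          · by_cases hj : j.val = 0
            · have : j = j0 := Fin.ext (by omega)
              rw [this]
              exact List.mem_cons_self
            · refine List.mem_cons_of_mem _ ?_
              rw [hM1]
              exact List.mem_append_left _ (hM3 j (by omega))
          · refine List.mem_cons_of_mem _ ?_
            rw [hM1]
            exact List.mem_append_right _ (hp'full g hg j)
        · intro z' hz'
          simp only [Walk.edges] at hz' ⊢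
          rcases List.mem_cons.1 hz' with rfl | hz'
          · exact List.mem_cons_self
          · rw [hM1, List.mem_append] at hz'
            rcases hz' with hz' | hz'
            · rw [hM2 z' hz']
              exact List.mem_cons_self
            · exact List.mem_cons_of_mem _ (hp'conv z' hz')
      · -- backward traversal of e0 from its target
        rcases sPos_inl src tgt n e0 (i := j0.val + 1) (by omega) h2 with
          ⟨hj00, hu⟩ | ⟨hj00, hu⟩
        · exact absurd hj00 (by omega)
        have hz : z = sPos src tgt n e0 (n e0) := by
          rw [show (n e0 : ℕ) = j0.val by omega]
          exact h1.symm
        have hprevb : sPos src tgt n e0 (n e0 + 1) ∉ q₂.support := by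
          rw [sPos_top, ← hu]
          exact hnd2.1
        obtain ⟨q', ⟨L, hL1, hL2⟩, ⟨M, hM1, hM2, hM3⟩⟩ :=
          consume_bwd A src tgt hst n e0 N (n e0) le_rfl q₂ hz (by omega)
            hnd2.2 hprevb
        have hq'len : q'.edges.length ≤ N := by
          have := congrArg List.length hM1
          rw [List.length_append] at this
          omega
        have hq'nd : q'.support.Nodup := by
          have h := hnd2.2
          rw [hL1] at h
          exact (List.nodup_append.1 h).2.1
        obtain ⟨p', hp's, hp'full, hp'conv⟩ := ih q' hq'len hq'nd rfl rfl
        have hLnil : L.filterMap Sum.getLeft? = [] := by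
          rw [List.filterMap_eq_nil_iff]
          intro a ha
          obtain ⟨j, hj1, hj2, rfl⟩ := hL2 a ha
          have h0 := sPos_inr_val src tgt n e0 ⟨j - 1, by omega⟩
          rw [show j - 1 + 1 = j by omega] at h0
          rw [h0]
          rfl
        refine ⟨Walk.cons e0 (show A.ends e0 = s(u, src e0) by
          rw [hst e0, hu]; exact Sym2.eq_swap) p', ?_, ?_, ?_⟩
        · simp only [Walk.support]
          rw [hL1, filterMap_getLeft?_inl, List.filterMap_append, hLnil, hp's,
            List.nil_append]
        · intro g hg j
          simp only [Walk.edges] at hg ⊢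
          rcases List.mem_cons.1 hg with rfl | hg
          · by_cases hj : j.val = n g
            · have : j = j0 := Fin.ext (by omega)
              rw [this]
              exact List.mem_cons_self
            · refine List.mem_cons_of_mem _ ?_
              rw [hM1]
              exact List.mem_append_left _ (hM3 j (by omega))
          · refine List.mem_cons_of_mem _ ?_
            rw [hM1]
            exact List.mem_append_right _ (hp'full g hg j)
        · intro z' hz'
          simp only [Walk.edges] at hz' ⊢
          rcases List.mem_cons.1 hz' with rfl | hz'
          · exact List.mem_cons_self
          · rw [hM1, List.mem_append] at hz'
            rcases hz' with hz' | hz'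
            · rw [hM2 z' hz']
              exact List.mem_cons_self
            · exact List.mem_cons_of_mem _ (hp'conv z' hz')

variable {V1 E1 : Type} {H : Multigraph V1 E1}

/-- Expanding an immersion model of `H` in `A` to one in the subdivision. -/
lemma exists_model_expand (m : ImmersionModel H A) :
    ∃ m' : ImmersionModel H (A.subdivide src tgt hst n),
      ∀ y, y ∈ m'.edgeSet ↔ y.1 ∈ m.edgeSet := by
  have h := fun f => exists_expand A src tgt hst n (m.path f) (m.path_isPath f)
  choose q hqpath hqedges hqsupp using h
  refine ⟨⟨Sum.inl ∘ m.vmap, fun a b hab => m.vmap_inj (Sum.inl.inj hab),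
    m.src, m.tgt, m.ends_eq, q, hqpath, ?_⟩, ?_⟩
  · intro f₁ f₂ hne x hx1 hx2
    exact m.edge_disjoint f₁ f₂ hne x.1 ((hqedges f₁ x).1 hx1) ((hqedges f₂ x).1 hx2)
  · intro y
    constructor
    · rintro ⟨f, hf⟩
      exact ⟨f, (hqedges f y).1 hf⟩
    · rintro ⟨f, hf⟩
      exact ⟨f, (hqedges f y).2 hf⟩

/-- The three-distinct-incident-edges condition. -/
def ThreeInc (H : Multigraph V1 E1) : Prop :=
  ∀ x : V1, ∃ f1 f2 f3 : E1, f1 ≠ f2 ∧ f1 ≠ f3 ∧ f2 ≠ f3 ∧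
    x ∈ H.ends f1 ∧ x ∈ H.ends f2 ∧ x ∈ H.ends f3

/-- Contracting an immersion model of `H` in the subdivision to one in `A`,
provided every branch vertex has three incident edges. -/
lemma exists_model_contract (hdeg : ThreeInc H)
    (m' : ImmersionModel H (A.subdivide src tgt hst n)) :
    ∃ m : ImmersionModel H A,
      (∀ g ∈ m.edgeSet, ∀ j : Fin (n g + 1), (⟨g, j⟩ : Σ e, Fin (n e + 1)) ∈ m'.edgeSet) ∧
      (∀ z ∈ m'.edgeSet, z.1 ∈ m.edgeSet) := by
  -- step 1: no branch vertex is a subdivision vertex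
  have hinl : ∀ x : V1, ∃ a : V, m'.vmap x = Sum.inl a := by
    intro x
    rcases hvx : m'.vmap x with a | ⟨e, i⟩
    · exact ⟨a, rfl⟩
    exfalso
    have hone : ∀ f : E1, x ∈ H.ends f →
        ∃ g ∈ (m'.path f).edges, m'.vmap x ∈ (A.subdivide src tgt hst n).ends g := by
      intro f hxf
      have hne : m'.src f ≠ m'.tgt f := by
        intro hcon
        exact H.loopless f (by rw [m'.ends_eq f, hcon]; exact Sym2.mk_isDiag_iff.2 rfl)
      have hvne : m'.vmap (m'.src f) ≠ m'.vmap (m'.tgt f) :=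
        fun hcon => hne (m'.vmap_inj hcon)
      rw [m'.ends_eq f] at hxf
      rcases Sym2.mem_iff.1 hxf with rfl | rfl
      · exact Walk.exists_edge_start (m'.path f) hvne
      · exact Walk.exists_edge_end (m'.path f) hvne
    obtain ⟨f1, f2, f3, h12, h13, h23, hx1, hx2, hx3⟩ := hdeg x
    obtain ⟨g1, hg1, hm1⟩ := hone f1 hx1
    obtain ⟨g2, hg2, hm2⟩ := hone f2 hx2
    obtain ⟨g3, hg3, hm3⟩ := hone f3 hx3
    rw [hvx] at hm1 hm2 hm3
    obtain ⟨j1, rfl, hj1⟩ := mem_ends_inr_cases A src tgt hst n hm1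
    obtain ⟨j2, rfl, hj2⟩ := mem_ends_inr_cases A src tgt hst n hm2
    obtain ⟨j3, rfl, hj3⟩ := mem_ends_inr_cases A src tgt hst n hm3
    have hne12 : j1 ≠ j2 := by
      intro hcon
      subst hcon
      exact m'.edge_disjoint f1 f2 h12 _ hg1 hg2
    have hne13 : j1 ≠ j3 := by
      intro hcon
      subst hcon
      exact m'.edge_disjoint f1 f3 h13 _ hg1 hg3
    have hne23 : j2 ≠ j3 := by
      intro hcon
      subst hcon
      exact m'.edge_disjoint f2 f3 h23 _ hg2 hg3
    have hv12 : j1.val ≠ j2.val := fun hcon => hne12 (Fin.ext hcon)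
    have hv13 : j1.val ≠ j3.val := fun hcon => hne13 (Fin.ext hcon)
    have hv23 : j2.val ≠ j3.val := fun hcon => hne23 (Fin.ext hcon)
    omega
  choose w hw using hinl
  have hcontract : ∀ f : E1, ∃ p : A.Walk (w (m'.src f)) (w (m'.tgt f)),
      p.support = (m'.path f).support.filterMap Sum.getLeft? ∧
      (∀ g ∈ p.edges, ∀ j : Fin (n g + 1),
        (⟨g, j⟩ : Σ e, Fin (n e + 1)) ∈ (m'.path f).edges) ∧
      (∀ z ∈ (m'.path f).edges, z.1 ∈ p.edges) := by
    intro f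
    exact exists_contract A src tgt hst n (m'.path f).edges.length (m'.path f)
      le_rfl (m'.path_isPath f) (hw (m'.src f)) (hw (m'.tgt f))
  choose p hp1 hp2 hp3 using hcontract
  have hwinj : Function.Injective w := by
    intro a b hab
    apply m'.vmap_inj
    rw [hw a, hw b, hab]
  refine ⟨⟨w, hwinj, m'.src, m'.tgt, m'.ends_eq, p, ?_, ?_⟩, ?_, ?_⟩
  · intro f
    show (p f).support.Nodup
    rw [hp1 f]
    refine List.Nodup.filterMap ?_ (m'.path_isPath f)
    rintro (a | a) (a' | a') b hb hb' <;>
      simp only [Sum.getLeft?, Option.mem_def, Option.some.injEq,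
        reduceCtorEq] at hb hb'
    subst hb; subst hb'; rfl
  · intro f₁ f₂ hne g hg1 hg2
    exact m'.edge_disjoint f₁ f₂ hne ⟨g, ⟨0, Nat.succ_pos _⟩⟩
      (hp2 f₁ g hg1 ⟨0, Nat.succ_pos _⟩) (hp2 f₂ g hg2 ⟨0, Nat.succ_pos _⟩)
  · rintro g ⟨f, hf⟩ j
    exact ⟨f, hp2 f g hf j⟩
  · rintro z ⟨f, hf⟩
    exact ⟨f, hp3 f z hf⟩

lemma packNum_subdivide (hdeg : ThreeInc H) :
    packNum H A = packNum H (A.subdivide src tgt hst n) := by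
  unfold packNum
  congr 1
  ext N
  constructor
  · rintro ⟨mf, hdisj⟩
    choose m' hm' using fun i => exists_model_expand A src tgt hst n (mf i)
    refine ⟨m', fun i j hij => Set.disjoint_left.2 fun y hyi hyj => ?_⟩
    exact Set.disjoint_left.1 (hdisj i j hij) ((hm' i y).1 hyi) ((hm' j y).1 hyj)
  · rintro ⟨mf', hdisj⟩
    choose m hfull hconv using fun i =>
      exists_model_contract A src tgt hst n hdeg (mf' i)
    refine ⟨m, fun i j hij => Set.disjoint_left.2 fun g hgi hgj => ?_⟩
    exact Set.disjoint_left.1 (hdisj i j hij)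
      (hfull i g hgi ⟨0, Nat.succ_pos _⟩) (hfull j g hgj ⟨0, Nat.succ_pos _⟩)

lemma coverNum_subdivide (hdeg : ThreeInc H) :
    coverNum H A = coverNum H (A.subdivide src tgt hst n) := by
  unfold coverNum
  set SA := {k | ∃ C : Finset E, ¬ Immersed H (A.deleteEdges ↑C) ∧ C.card = k} with hSA
  set SB := {k | ∃ C : Finset (Σ e : E, Fin (n e + 1)),
    ¬ Immersed H ((A.subdivide src tgt hst n).deleteEdges ↑C) ∧ C.card = k} with hSB
  have claim1 : SA ⊆ SB := by
    rintro k ⟨C, hC, rfl⟩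
    refine ⟨C.image (fun e => (⟨e, ⟨0, Nat.succ_pos _⟩⟩ : Σ e, Fin (n e + 1))), ?_, ?_⟩
    · intro him
      rw [immersed_deleteEdges_iff] at him
      obtain ⟨m', hm'⟩ := him
      obtain ⟨m, hfull, hconv⟩ := exists_model_contract A src tgt hst n hdeg m'
      apply hC
      rw [immersed_deleteEdges_iff]
      refine ⟨m, fun g hg hgC => ?_⟩
      refine hm' ⟨g, ⟨0, Nat.succ_pos _⟩⟩ (hfull g hg ⟨0, Nat.succ_pos _⟩) ?_
      simp only [Finset.coe_image, Set.mem_image, Finset.mem_coe]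
      exact ⟨g, hgC, rfl⟩
    · refine Finset.card_image_of_injective _ ?_
      intro a b hab
      exact congrArg Sigma.fst hab
  have claim2 : ∀ k ∈ SB, ∃ k' ∈ SA, k' ≤ k := by
    rintro k ⟨C', hC', rfl⟩
    refine ⟨(C'.image Sigma.fst).card, ⟨C'.image Sigma.fst, ?_, rfl⟩,
      Finset.card_image_le⟩
    intro him
    rw [immersed_deleteEdges_iff] at him
    obtain ⟨m, hm⟩ := him
    obtain ⟨m', hm'e⟩ := exists_model_expand A src tgt hst n m
    apply hC'
    rw [immersed_deleteEdges_iff]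
    refine ⟨m', fun y hy hyC => ?_⟩
    refine hm y.1 ((hm'e y).1 hy) ?_
    simp only [Finset.coe_image, Set.mem_image, Finset.mem_coe]
    exact ⟨y, hyC, rfl⟩
  rcases Set.eq_empty_or_nonempty SA with hA | hA
  · have hB : SB = ∅ := by
      rw [Set.eq_empty_iff_forall_notMem]
      intro k hk
      obtain ⟨k', hk', -⟩ := claim2 k hk
      rw [hA] at hk'
      exact hk'
    rw [hA, hB]
  · have hB : SB.Nonempty := ⟨_, claim1 hA.choose_spec⟩
    apply le_antisymm
    · obtain ⟨k', hk', hle⟩ := claim2 _ (Nat.sInf_mem hB)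
      exact le_trans (Nat.sInf_le hk') hle
    · exact Nat.sInf_le (claim1 (Nat.sInf_mem hA))

end Subdivision2

/-- Every vertex of `H⁺` has three distinct incident edges, when `H` is connected
with an edge. -/
lemma plus_threeInc (H : Multigraph V1 E1) (hc : H.Connected) (he : Nonempty E1) :
    ThreeInc H.plus := by
  have hrep : ∀ z : Sym2 V1, ∃ a b, z = s(a, b) := by
    intro z
    induction z using Sym2.ind with
    | _ a b => exact ⟨a, b, rfl⟩
  have hinc : ∀ v : V1, ∃ e : E1, v ∈ H.ends e := by
    intro v
    obtain ⟨e0⟩ := he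
    obtain ⟨a, b, hab⟩ := hrep (H.ends e0)
    obtain ⟨pw⟩ := hc.2 a v
    by_cases hav : a = v
    · exact ⟨e0, by rw [hab, ← hav]; exact Sym2.mem_mk_left _ _⟩
    · obtain ⟨g, -, hg⟩ := Walk.exists_edge_end pw hav
      exact ⟨g, hg⟩
  rintro (v | ⟨v, b⟩)
  · obtain ⟨e1, he1⟩ := hinc v
    refine ⟨.inr (.inr (v, false)), .inr (.inr (v, true)), .inl e1, ?_, ?_, ?_, ?_, ?_, ?_⟩
    · simp
    · simp
    · simp
    · exact Sym2.mem_mk_left _ _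
    · exact Sym2.mem_mk_left _ _
    · exact Sym2.mem_map.2 ⟨v, he1, rfl⟩
  · refine ⟨.inr (.inl (v, 0)), .inr (.inl (v, 1)), .inr (.inr (v, b)), ?_, ?_, ?_, ?_, ?_, ?_⟩
    · simp [Fin.ext_iff]
    · simp
    · simp
    · cases b
      · exact Sym2.mem_mk_left _ _
      · exact Sym2.mem_mk_right _ _
    · cases b
      · exact Sym2.mem_mk_left _ _
      · exact Sym2.mem_mk_right _ _
    · exact Sym2.mem_mk_right _ _

end Multigraph

/-- For any subdivision `G'` of `G*`, `pack_{H⁺}(G*) = pack_{H⁺}(G')` and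
`cover_{H⁺}(G*) = cover_{H⁺}(G')`. -/
theorem packNum_coverNum_plus_star_subdivision {V1 E1 V E : Type} [Fintype E]
    (H : Multigraph V1 E1) (G : Multigraph V E)
    (hc : H.Connected) (he : Nonempty E1)
    (src tgt : (E ⊕ (((Σ v : V, Fin (G.mdeg v)) × Fin 2) ⊕ ((Σ v : V, Fin (G.mdeg v)) × Bool))) →
      (V ⊕ ((Σ v : V, Fin (G.mdeg v)) × Bool)))
    (hst : ∀ e, (G.star).ends e = s(src e, tgt e))
    (n : (E ⊕ (((Σ v : V, Fin (G.mdeg v)) × Fin 2) ⊕ ((Σ v : V, Fin (G.mdeg v)) × Bool))) → ℕ) :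
    Multigraph.packNum H.plus G.star =
        Multigraph.packNum H.plus ((G.star).subdivide src tgt hst n) ∧
    Multigraph.coverNum H.plus G.star =
        Multigraph.coverNum H.plus ((G.star).subdivide src tgt hst n) := by
  have hdeg := Multigraph.plus_threeInc H hc he
  exact ⟨Multigraph.packNum_subdivide (G.star) src tgt hst n hdeg,
    Multigraph.coverNum_subdivide (G.star) src tgt hst n hdeg⟩
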